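/- Let λ* > 0, S̄₀ ∈ (0,1], λ̄ : ℝ≥0 → [0, λ*] measurable, and g : ℝ≥0 → [0, λ* (1−S̄₀)] measurable. Define the iteration u⁽⁰⁾ ≡ 0 and u⁽ⁿ⁺¹⁾(t) = (S̄₀ − ∫₀ᵗ u⁽ⁿ⁾(s) ds)⁺ · (g(t) + ∫₀ᵗ λ̄(t−s) u⁽ⁿ⁾(s) ds). Then on any interval [0,T], sup_{t≤T} |u⁽ⁿ⁺¹⁾(t) − u⁽ⁿ⁾(t)| ≤ (2λ*)ⁿ Tⁿ/n! · sup_{t≤T} |u⁽¹⁾(t) − u⁽⁰⁾(t)|, provided ∫₀ᵗ u⁽ⁿ⁾(s) ds ≤ S̄₀ for all n and t ≤ T; consequently (u⁽ⁿ⁾) is uniformly Cauchy on [0,T]. -/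

import Mathlib

open MeasureTheory intervalIntegral

private lemma picard_aux_intInt {lam : ℝ → ℝ} (hlam_meas : Measurable lam) {lamStar : ℝ}
    (hlam_bdd : ∀ s, 0 ≤ s → |lam s| ≤ lamStar)
    {f : ℝ → ℝ} (hf : Continuous f) {t : ℝ} (ht : 0 ≤ t) :
    IntervalIntegrable (fun s => lam (t - s) * f s) volume 0 t := by
  obtain ⟨C, hC⟩ :=
    (isCompact_Icc (a := (0:ℝ)) (b := t)).exists_bound_of_continuousOn hf.continuousOn
  rw [intervalIntegrable_iff_integrableOn_Ioc_of_le ht]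
  refine Integrable.mono' (g := fun _ => lamStar * C)
      (integrableOn_const measure_Ioc_lt_top.ne) ?_ ?_
  · exact ((hlam_meas.comp (measurable_const.sub measurable_id)).mul
      hf.measurable).aestronglyMeasurable
  · filter_upwards [ae_restrict_mem measurableSet_Ioc] with s hs
    have hs1 : 0 ≤ t - s := by
      have := hs.2; linarith
    have h1 : |lam (t - s)| ≤ lamStar := hlam_bdd _ hs1
    have h2 : ‖f s‖ ≤ C := hC s ⟨hs.1.le, hs.2⟩
    calc ‖lam (t - s) * f s‖ = |lam (t - s)| * ‖f s‖ := by
          rw [norm_mul]; rfl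
      _ ≤ lamStar * C :=
          mul_le_mul h1 h2 (norm_nonneg _) ((abs_nonneg _).trans h1)

set_option maxHeartbeats 1000000 in
/-- Picard iteration for the boundary Volterra equation: factorial contraction estimate
    and uniform Cauchyness on [0,T]. -/
theorem picard_iteration_cauchy
    (lamStar T : ℝ) (hlamStar : 0 < lamStar) (hT : 0 < T)
    (S0 : ℝ) (hS0 : S0 ∈ Set.Ioc (0:ℝ) 1)
    (lam : ℝ → ℝ) (hlam_meas : Measurable lam)
    (hlam_bdd : ∀ t, 0 ≤ t → lam t ∈ Set.Icc 0 lamStar)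
    (g : ℝ → ℝ) (hg_meas : Measurable g)
    (hg_bdd : ∀ t, 0 ≤ t → g t ∈ Set.Icc 0 (lamStar * (1 - S0)))
    (u : ℕ → ℝ → ℝ)
    (hu_cont : ∀ n, Continuous (u n))
    (hu0 : ∀ t, u 0 t = 0)
    (hu_rec : ∀ n t, 0 ≤ t →
      u (n + 1) t = max (S0 - ∫ s in (0:ℝ)..t, u n s) 0 *
        (g t + ∫ s in (0:ℝ)..t, lam (t - s) * u n s))
    (hu_int : ∀ n, ∀ t ∈ Set.Icc (0:ℝ) T, (∫ s in (0:ℝ)..t, u n s) ≤ S0) :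
    (∀ n, ∀ t ∈ Set.Icc (0:ℝ) T,
      |u (n + 1) t - u n t| ≤
        (2 * lamStar) ^ n * T ^ n / (n.factorial : ℝ) *
          (⨆ s ∈ Set.Icc (0:ℝ) T, |u 1 s - u 0 s|)) ∧
    UniformCauchySeqOn u Filter.atTop (Set.Icc 0 T) := by
  obtain ⟨hS0pos, hS0le⟩ := hS0
  have hlam_abs : ∀ s, 0 ≤ s → |lam s| ≤ lamStar := fun s hs =>
    abs_le.2 ⟨by linarith [(hlam_bdd s hs).1], (hlam_bdd s hs).2⟩
  have hInt1 : ∀ n (t : ℝ), IntervalIntegrable (u n) volume 0 t := fun n t =>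
    (hu_cont n).intervalIntegrable _ _
  have hInt2 : ∀ (f : ℝ → ℝ), Continuous f → ∀ t : ℝ, 0 ≤ t →
      IntervalIntegrable (fun s => lam (t - s) * f s) volume 0 t := fun f hf t ht =>
    picard_aux_intInt hlam_meas hlam_abs hf ht
  -- nonnegativity of the iterates
  have hnonneg : ∀ n (t : ℝ), 0 ≤ t → 0 ≤ u n t := by
    intro n
    induction n with
    | zero => intro t _; simp [hu0]
    | succ n ih =>
      intro t ht
      rw [hu_rec n t ht]
      refine mul_nonneg (le_max_right _ _) (add_nonneg (hg_bdd t ht).1 ?_)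
      refine intervalIntegral.integral_nonneg ht fun s hs => ?_
      exact mul_nonneg (hlam_bdd _ (by linarith [hs.2])).1 (ih s hs.1)
  have hIntNonneg : ∀ n (t : ℝ), 0 ≤ t → 0 ≤ ∫ s in (0:ℝ)..t, u n s := fun n t ht =>
    intervalIntegral.integral_nonneg ht fun s hs => hnonneg n s hs.1
  -- bound on the second factor Q
  have hQ : ∀ n, ∀ t ∈ Set.Icc (0:ℝ) T,
      (g t + ∫ s in (0:ℝ)..t, lam (t - s) * u n s) ∈ Set.Icc 0 lamStar := by
    intro n t ht
    constructor
    · refine add_nonneg (hg_bdd t ht.1).1 (intervalIntegral.integral_nonneg ht.1 fun s hs => ?_)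
      exact mul_nonneg (hlam_bdd _ (by linarith [hs.2])).1 (hnonneg n s hs.1)
    · have h1 : (∫ s in (0:ℝ)..t, lam (t - s) * u n s) ≤ ∫ s in (0:ℝ)..t, lamStar * u n s := by
        refine intervalIntegral.integral_mono_on ht.1 (hInt2 _ (hu_cont n) t ht.1)
          ((hInt1 n t).const_mul lamStar) fun s hs => ?_
        exact mul_le_mul_of_nonneg_right (hlam_bdd _ (by linarith [hs.2])).2 (hnonneg n s hs.1)
      rw [intervalIntegral.integral_const_mul] at h1
      have h2 := mul_le_mul_of_nonneg_left (hu_int n t ht) hlamStar.le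
      have h3 := (hg_bdd t ht.1).2
      linarith
  -- key contraction step
  have hkey : ∀ n, ∀ t ∈ Set.Icc (0:ℝ) T,
      |u (n + 2) t - u (n + 1) t| ≤ 2 * lamStar * ∫ s in (0:ℝ)..t, |u (n + 1) s - u n s| := by
    intro n t ht
    obtain ⟨ht0, htT⟩ := ht
    set d : ℝ → ℝ := fun s => u (n + 1) s - u n s with hd
    have hdc : Continuous d := (hu_cont (n + 1)).sub (hu_cont n)
    have hdInt : IntervalIntegrable d volume 0 t := hdc.intervalIntegrable _ _
    have hInonneg : 0 ≤ ∫ s in (0:ℝ)..t, |d s| :=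
      intervalIntegral.integral_nonneg ht0 fun s _ => abs_nonneg _
    set P1 := max (S0 - ∫ s in (0:ℝ)..t, u (n + 1) s) 0 with hP1def
    set P0 := max (S0 - ∫ s in (0:ℝ)..t, u n s) 0 with hP0def
    set Q1 := g t + ∫ s in (0:ℝ)..t, lam (t - s) * u (n + 1) s with hQ1def
    set Q0 := g t + ∫ s in (0:ℝ)..t, lam (t - s) * u n s with hQ0def
    have hrw : u (n + 2) t - u (n + 1) t = P1 * (Q1 - Q0) + (P1 - P0) * Q0 := by
      have e1 := hu_rec (n + 1) t ht0
      have e2 := hu_rec n t ht0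
      rw [show n + 1 + 1 = n + 2 from rfl] at e1
      rw [e1, e2]; ring
    have hP1 : |P1| ≤ 1 := by
      rw [abs_of_nonneg (le_max_right _ _)]
      exact max_le (by linarith [hIntNonneg (n + 1) t ht0]) zero_le_one
    have hQd : |Q1 - Q0| ≤ lamStar * ∫ s in (0:ℝ)..t, |d s| := by
      have e : Q1 - Q0 = ∫ s in (0:ℝ)..t, lam (t - s) * d s := by
        simp only [hd, mul_sub]
        rw [intervalIntegral.integral_sub (hInt2 _ (hu_cont (n + 1)) t ht0)
          (hInt2 _ (hu_cont n) t ht0)]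
        simp only [hQ1def, hQ0def]; ring
      rw [e]
      calc |∫ s in (0:ℝ)..t, lam (t - s) * d s| ≤ ∫ s in (0:ℝ)..t, |lam (t - s) * d s| :=
            intervalIntegral.abs_integral_le_integral_abs ht0
        _ ≤ ∫ s in (0:ℝ)..t, lamStar * |d s| := by
            refine intervalIntegral.integral_mono_on ht0 (hInt2 _ hdc t ht0).abs
              (hdInt.abs.const_mul lamStar) fun s hs => ?_
            rw [abs_mul]
            exact mul_le_mul_of_nonneg_right (hlam_abs _ (by linarith [hs.2])) (abs_nonneg _)
        _ = lamStar * ∫ s in (0:ℝ)..t, |d s| := intervalIntegral.integral_const_mul _ _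
    have hPd : |P1 - P0| ≤ ∫ s in (0:ℝ)..t, |d s| := by
      have e : (∫ s in (0:ℝ)..t, d s) =
          (∫ s in (0:ℝ)..t, u (n + 1) s) - ∫ s in (0:ℝ)..t, u n s :=
        intervalIntegral.integral_sub (hInt1 (n + 1) t) (hInt1 n t)
      calc |P1 - P0| ≤ |(S0 - ∫ s in (0:ℝ)..t, u (n + 1) s) -
            (S0 - ∫ s in (0:ℝ)..t, u n s)| := abs_max_sub_max_le_abs _ _ _
        _ = |∫ s in (0:ℝ)..t, d s| := by rw [e, abs_sub_comm]; ring_nf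
        _ ≤ ∫ s in (0:ℝ)..t, |d s| := intervalIntegral.abs_integral_le_integral_abs ht0
    have hQ0abs : |Q0| ≤ lamStar := by
      have := hQ n t ⟨ht0, htT⟩
      rw [abs_of_nonneg this.1]; exact this.2
    calc |u (n + 2) t - u (n + 1) t| = |P1 * (Q1 - Q0) + (P1 - P0) * Q0| := by rw [hrw]
      _ ≤ |P1| * |Q1 - Q0| + |P1 - P0| * |Q0| := by
          refine (abs_add_le _ _).trans ?_
          rw [abs_mul, abs_mul]
      _ ≤ 1 * (lamStar * ∫ s in (0:ℝ)..t, |d s|) +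
            (∫ s in (0:ℝ)..t, |d s|) * lamStar := by
          refine add_le_add (mul_le_mul hP1 hQd (abs_nonneg _) zero_le_one)
            (mul_le_mul hPd hQ0abs (abs_nonneg _) hInonneg)
      _ = 2 * lamStar * ∫ s in (0:ℝ)..t, |d s| := by ring
  -- the sup M
  set f1 : ℝ → ℝ := fun s => |u 1 s - u 0 s| with hf1def
  have hf1c : Continuous f1 := ((hu_cont 1).sub (hu_cont 0)).abs
  obtain ⟨C, hC⟩ :=
    (isCompact_Icc (a := (0:ℝ)) (b := T)).exists_bound_of_continuousOn hf1c.continuousOn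
  set F : ℝ → ℝ := fun s => ⨆ (_ : s ∈ Set.Icc (0:ℝ) T), f1 s with hFdef
  have hFb : BddAbove (Set.range F) := by
    refine ⟨max C 0, ?_⟩
    rintro x ⟨s, rfl⟩
    by_cases hs : s ∈ Set.Icc (0:ℝ) T
    · have : F s = f1 s := by simp only [hFdef, ciSup_pos hs]
      rw [this]
      exact le_max_of_le_left ((le_abs_self _).trans ((le_abs_self _).trans_eq
        (abs_abs _)) |>.trans (hC s hs))
    · have : F s = 0 := by
        simp only [hFdef]
        haveI : IsEmpty (s ∈ Set.Icc (0:ℝ) T) := ⟨hs⟩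
        exact Real.iSup_of_isEmpty _
      rw [this]; exact le_max_right _ _
  set M : ℝ := ⨆ s ∈ Set.Icc (0:ℝ) T, f1 s with hMdef
  have hM : ∀ t ∈ Set.Icc (0:ℝ) T, f1 t ≤ M := by
    intro t ht
    have h1 : f1 t = F t := by simp only [hFdef, ciSup_pos ht]
    rw [h1]
    exact le_ciSup hFb t
  have hM0 : 0 ≤ M := (abs_nonneg _).trans (hM 0 ⟨le_refl _, hT.le⟩)
  -- main pointwise inductive bound
  have hmain : ∀ n, ∀ t ∈ Set.Icc (0:ℝ) T,
      |u (n + 1) t - u n t| ≤ (2 * lamStar) ^ n * t ^ n / (n.factorial : ℝ) * M := by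
    intro n
    induction n with
    | zero =>
      intro t ht
      simpa using hM t ht
    | succ n ih =>
      intro t ht
      have h1 := hkey n t ht
      have h2 : (∫ s in (0:ℝ)..t, |u (n + 1) s - u n s|) ≤
          ∫ s in (0:ℝ)..t, (2 * lamStar) ^ n * s ^ n / (n.factorial : ℝ) * M := by
        refine intervalIntegral.integral_mono_on ht.1
          (((hu_cont (n + 1)).sub (hu_cont n)).abs.intervalIntegrable _ _)
          (Continuous.intervalIntegrable
            ((((continuous_const.mul (continuous_pow n)).div_const _).mul continuous_const)) _ _)
            fun s hs => ?_
        exact ih s ⟨hs.1, hs.2.trans ht.2⟩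
      have h3 : (∫ s in (0:ℝ)..t, (2 * lamStar) ^ n * s ^ n / (n.factorial : ℝ) * M) =
          (2 * lamStar) ^ n / (n.factorial : ℝ) * M * (t ^ (n + 1) / (n + 1)) := by
        have e : ∀ s : ℝ, (2 * lamStar) ^ n * s ^ n / (n.factorial : ℝ) * M =
            ((2 * lamStar) ^ n / (n.factorial : ℝ) * M) * s ^ n := fun s => by ring
        simp only [e]
        rw [intervalIntegral.integral_const_mul, integral_pow]
        norm_num
      have hfact : (((n + 1).factorial : ℕ) : ℝ) = ((n : ℝ) + 1) * (n.factorial : ℝ) := by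
        push_cast [Nat.factorial_succ]; ring
      have hfne : (n.factorial : ℝ) ≠ 0 := Nat.cast_ne_zero.2 n.factorial_ne_zero
      have hnne : ((n : ℝ) + 1) ≠ 0 := by positivity
      calc |u (n + 1 + 1) t - u (n + 1) t|
          ≤ 2 * lamStar * ∫ s in (0:ℝ)..t, |u (n + 1) s - u n s| := h1
        _ ≤ 2 * lamStar *
            ((2 * lamStar) ^ n / (n.factorial : ℝ) * M * (t ^ (n + 1) / (n + 1))) := by
            rw [← h3]
            exact mul_le_mul_of_nonneg_left h2 (by positivity)
        _ = (2 * lamStar) ^ (n + 1) * t ^ (n + 1) / (((n + 1).factorial : ℕ) : ℝ) * M := by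
            rw [hfact]
            field_simp
            ring
  have part1 : ∀ n, ∀ t ∈ Set.Icc (0:ℝ) T,
      |u (n + 1) t - u n t| ≤ (2 * lamStar) ^ n * T ^ n / (n.factorial : ℝ) * M := by
    intro n t ht
    refine (hmain n t ht).trans ?_
    gcongr
    · exact ht.1
    · exact ht.2
  refine ⟨part1, ?_⟩
  -- uniform Cauchyness
  set b : ℕ → ℝ := fun k => (2 * lamStar * T) ^ k / (k.factorial : ℝ) * M with hbdef
  have hb_nonneg : ∀ k, 0 ≤ b k := fun k => by
    have : (0:ℝ) ≤ (2 * lamStar * T) ^ k := by positivity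
    exact mul_nonneg (div_nonneg this (Nat.cast_nonneg _)) hM0
  have hb_sum : Summable b :=
    (Real.summable_pow_div_factorial (2 * lamStar * T)).mul_right M
  have hbound : ∀ k, ∀ x ∈ Set.Icc (0:ℝ) T, dist (u (k + 1) x) (u k x) ≤ b k := by
    intro k x hx
    rw [Real.dist_eq]
    refine (part1 k x hx).trans_eq ?_
    simp only [hbdef]
    ring_nf
  rw [Metric.uniformCauchySeqOn_iff]
  intro ε hε
  have htail : Filter.Tendsto (fun i => ∑' k, b (k + i)) Filter.atTop (nhds 0) :=
    tendsto_sum_nat_add b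
  obtain ⟨N, hN⟩ := Filter.eventually_atTop.mp (htail.eventually (gt_mem_nhds hε))
  have key : ∀ p q, N ≤ p → p ≤ q → ∀ x ∈ Set.Icc (0:ℝ) T, dist (u p x) (u q x) < ε := by
    intro p q hNp hpq x hx
    have h1 : dist (u p x) (u q x) ≤ ∑ i ∈ Finset.Ico p q, dist (u i x) (u (i + 1) x) :=
      dist_le_Ico_sum_dist (fun k => u k x) hpq
    have h2 : ∑ i ∈ Finset.Ico p q, dist (u i x) (u (i + 1) x) ≤ ∑ i ∈ Finset.Ico p q, b i := by
      refine Finset.sum_le_sum fun i _ => ?_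
      rw [dist_comm]
      exact hbound i x hx
    have h3 : ∑ i ∈ Finset.Ico p q, b i = ∑ j ∈ Finset.range (q - p), b (p + j) :=
      Finset.sum_Ico_eq_sum_range b p q
    have h4 : ∑ j ∈ Finset.range (q - p), b (p + j) ≤ ∑' j, b (j + p) := by
      have hsum : Summable fun j => b (j + p) := (summable_nat_add_iff p).2 hb_sum
      have e : ∀ j, b (p + j) = b (j + p) := fun j => by rw [add_comm]
      simp only [e]
      exact Summable.sum_le_tsum _ (fun i _ => hb_nonneg _) hsum
    have h5 : (∑' j, b (j + p)) < ε := hN p hNp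
    linarith
  refine ⟨N, fun m hm n hn x hx => ?_⟩
  rcases le_total m n with h | h
  · exact key m n hm h x hx
  · rw [dist_comm]; exact key n m hn h x hx
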